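/- (Composability.) Assume (N₁, m₁) ▷_E (N₂, m₂) and that the marked net (M, m) is compatible with this equivalence (its places are disjoint from P₁ ∪ P₂ and from the fresh variables of E). Then (N₁, m₁) ∥ (M, m) ▷_E (N₂, m₂) ∥ (M, m). -/

import Mathlib

/-- A labeled Petri net over a global type `V` of variables/places and labels in
`L` (`none` is the silent label `τ`).  The net only uses the places in `places`:
the flow functions vanish outside of it. -/
structure LNet (V L : Type) where
  T : Type
  places : Set V
  Pre : T → V → ℕ
  Post : T → V → ℕ
  pre_supp : ∀ t p, p ∉ places → Pre t p = 0
  post_supp : ∀ t p, p ∉ places → Post t p = 0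
  label : T → Option L

namespace LNet

variable {V L : Type}

/-- Transition `t` is enabled at marking `m`. -/
def Enabled (N : LNet V L) (m : V → ℕ) (t : N.T) : Prop :=
  ∀ p, N.Pre t p ≤ m p

/-- `m →t m'` : `t` is enabled at `m` and `m' = m - Pre(t) + Post(t)` (pointwise). -/
def Fire (N : LNet V L) (m : V → ℕ) (t : N.T) (m' : V → ℕ) : Prop :=
  N.Enabled m t ∧ ∀ p, m' p = m p - N.Pre t p + N.Post t p

/-- `m ⇒ρ m'` : the firing sequence `ρ` fires from `m` to `m'`. -/
def FireSeq (N : LNet V L) : (V → ℕ) → List N.T → (V → ℕ) → Prop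
  | m, [], m' => m' = m
  | m, t :: ρ, m'' => ∃ m', N.Fire m t m' ∧ N.FireSeq m' ρ m''

/-- Reachability from `m₀`. -/
def Reach (N : LNet V L) (m₀ m : V → ℕ) : Prop :=
  ∃ ρ, N.FireSeq m₀ ρ m

/-- The observation sequence of a firing sequence (silent transitions erased). -/
def Obs (N : LNet V L) (ρ : List N.T) : List L :=
  ρ.filterMap N.label

end LNet

/-- `m₁ ⊎ m₂ ⊨ E` : the two markings are compatible and, jointly, satisfy the
constraint system `E` (i.e. `E ∧ m̲₁ ∧ m̲₂` is satisfiable: some valuation of all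
the variables agrees with `m₁` on `P₁`, with `m₂` on `P₂` and satisfies `E`). -/
def JSat {V L : Type} (N₁ N₂ : LNet V L) (E : (V → ℕ) → Prop)
    (m₁ m₂ : V → ℕ) : Prop :=
  ∃ v : V → ℕ, (∀ p ∈ N₁.places, v p = m₁ p) ∧ (∀ p ∈ N₂.places, v p = m₂ p) ∧ E v

/-- `(N₁, m₁) ⊒_E (N₂, m₂)` : `(N₂, m₂)` is an `E`-abstraction of `(N₁, m₁)`,
conditions (A1) and (A2). -/
def EAbs {V L : Type} (N₁ : LNet V L) (m₁ : V → ℕ) (N₂ : LNet V L) (m₂ : V → ℕ)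
    (E : (V → ℕ) → Prop) : Prop :=
  -- (A1) the initial markings jointly satisfy `E`
  JSat N₁ N₂ E m₁ m₂ ∧
  -- (A2)
  ∀ ρ₁ m₁', N₁.FireSeq m₁ ρ₁ m₁' →
    (∃ m₂' : V → ℕ, JSat N₁ N₂ E m₁' m₂') ∧
    ∀ m₂' : V → ℕ, JSat N₁ N₂ E m₁' m₂' →
      ∃ ρ₂ m₂'', N₂.FireSeq m₂ ρ₂ m₂'' ∧ (∀ p ∈ N₂.places, m₂'' p = m₂' p) ∧
        N₁.Obs ρ₁ = N₂.Obs ρ₂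

/-- `(N₁, m₁) ▷_E (N₂, m₂)` : `E`-abstraction equivalence (abstraction in both
directions). -/
def EEquiv {V L : Type} (N₁ : LNet V L) (m₁ : V → ℕ) (N₂ : LNet V L) (m₂ : V → ℕ)
    (E : (V → ℕ) → Prop) : Prop :=
  EAbs N₁ m₁ N₂ m₂ E ∧ EAbs N₂ m₂ N₁ m₁ E

/-- `F` is a formula whose (free) variables all belong to `S`: its truth value
only depends on the values of the variables in `S`. -/
def DependsOnVars {V : Type} (F : (V → ℕ) → Prop) (S : Set V) : Prop :=
  ∀ v w : V → ℕ, (∀ x ∈ S, v x = w x) → (F v ↔ F w)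

open scoped Classical

/-- Valid transitions of the synchronous product (relative to the alphabets
`S₁`, `S₂` of the two nets): a non-synchronizable transition of one component
fires alone, transitions with a matching (observable) label fire jointly. -/
def Valid {T₁ T₂ L : Type} (l₁ : T₁ → Option L) (l₂ : T₂ → Option L) (S₁ S₂ : Set L) :
    Option T₁ × Option T₂ → Prop
  | (some t₁, none) => ∀ a, l₁ t₁ = some a → a ∉ S₂
  | (none, some t₂) => ∀ a, l₂ t₂ = some a → a ∉ S₁
  | (some t₁, some t₂) => ∃ a, l₁ t₁ = some a ∧ l₂ t₂ = some a
  | (none, none) => False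

/-- The synchronous product `N₁ ∥ N₂` of two labeled Petri nets (with alphabets
`S₁` and `S₂`): places are `P₁ ∪ P₂`, flow functions are inherited
componentwise. -/
def prodNet {V L : Type} (N₁ N₂ : LNet V L) (S₁ S₂ : Set L) : LNet V L where
  T := {tp : Option N₁.T × Option N₂.T // Valid N₁.label N₂.label S₁ S₂ tp}
  places := N₁.places ∪ N₂.places
  Pre t p := (t.val.1.elim 0 fun t₁ => N₁.Pre t₁ p) + (t.val.2.elim 0 fun t₂ => N₂.Pre t₂ p)
  Post t p := (t.val.1.elim 0 fun t₁ => N₁.Post t₁ p) + (t.val.2.elim 0 fun t₂ => N₂.Post t₂ p)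
  pre_supp := by
    intro t p hp
    have h1 : p ∉ N₁.places := fun h => hp (Or.inl h)
    have h2 : p ∉ N₂.places := fun h => hp (Or.inr h)
    rcases t with ⟨⟨t₁, t₂⟩, -⟩
    cases t₁ <;> cases t₂ <;>
      simp [Option.elim, N₁.pre_supp _ _ h1, N₂.pre_supp _ _ h2]
  post_supp := by
    intro t p hp
    have h1 : p ∉ N₁.places := fun h => hp (Or.inl h)
    have h2 : p ∉ N₂.places := fun h => hp (Or.inr h)
    rcases t with ⟨⟨t₁, t₂⟩, -⟩
    cases t₁ <;> cases t₂ <;>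
      simp [Option.elim, N₁.post_supp _ _ h1, N₂.post_supp _ _ h2]
  label t := t.val.1.elim (t.val.2.elim none N₂.label) N₁.label

/-- The joint marking `m₁ ∥ m₂` of a synchronous product whose left component
has places `P`: it agrees with `m₁` on `P` and with `m₂` elsewhere (the place
sets being disjoint). -/
noncomputable def combine {V : Type} (P : Set V) (m₁ m₂ : V → ℕ) : V → ℕ :=
  fun p => if p ∈ P then m₁ p else m₂ p

section Test
lemma filterMap_split {α β : Type*} (f : α → Option β) :
    ∀ (l : List α) (a : β) (r : List β), l.filterMap f = a :: r →
      ∃ l₁ x l₂, l = l₁ ++ x :: l₂ ∧ (∀ y ∈ l₁, f y = none) ∧ f x = some a ∧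
        l₂.filterMap f = r := by
  intro l
  induction l with
  | nil => intro a r h; simp at h
  | cons y l ih =>
    intro a r h
    cases hy : f y with
    | none =>
      rw [List.filterMap_cons_none hy] at h
      obtain ⟨l₁, x, l₂, rfl, h1, h2, h3⟩ := ih a r h
      refine ⟨y :: l₁, x, l₂, rfl, ?_, h2, h3⟩
      intro z hz
      rcases List.mem_cons.1 hz with rfl | hz
      · exact hy
      · exact h1 z hz
    | some b =>
      rw [List.filterMap_cons_some hy] at h
      obtain ⟨rfl, rfl⟩ : b = a ∧ l.filterMap f = r := by
        constructor <;> [exact (List.cons.injEq _ _ _ _ ▸ h).1; exact (List.cons.injEq _ _ _ _ ▸ h).2]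
      exact ⟨[], y, l, rfl, by simp, hy, rfl⟩
end Test
section Aux

variable {V L : Type}

/-- Decompose a firing sequence of a product into its two components. -/
lemma decompose (N M : LNet V L) (S SM : Set L)
    (hd : ∀ p, p ∈ N.places → p ∉ M.places) :
    ∀ (ρ : List (prodNet N M S SM).T) (μ μ' a b : V → ℕ),
      (prodNet N M S SM).FireSeq μ ρ μ' →
      (∀ p ∈ N.places, a p = μ p) → (∀ p ∈ M.places, b p = μ p) →
      ∃ a' b', N.FireSeq a (ρ.filterMap (·.val.1)) a' ∧
        M.FireSeq b (ρ.filterMap (·.val.2)) b' ∧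
        (∀ p ∈ N.places, a' p = μ' p) ∧ (∀ p ∈ M.places, b' p = μ' p) := by
  intro ρ
  induction ρ with
  | nil =>
    intro μ μ' a b hf ha hb
    obtain rfl : μ' = μ := hf
    exact ⟨a, b, rfl, rfl, ha, hb⟩
  | cons t ρ ih =>
    rcases t with ⟨⟨o₁, o₂⟩, hv⟩
    intro μ μ' a b hf ha hb
    obtain ⟨μ₀, ⟨hen, hupd⟩, hrest⟩ := hf
    cases o₁ with
    | none =>
      cases o₂ with
      | none => exact absurd hv id
      | some tM =>
        -- M fires alone
        have henM : M.Enabled b tM := by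
          intro p
          by_cases hp : p ∈ M.places
          · rw [hb p hp]
            simpa [prodNet] using hen p
          · simp [M.pre_supp _ _ hp]
        set b₀ : V → ℕ := fun p => b p - M.Pre tM p + M.Post tM p with hb₀
        have hb₀' : ∀ p ∈ M.places, b₀ p = μ₀ p := by
          intro p hp
          rw [hupd p]
          simp [prodNet, hb₀, hb p hp]
        have ha' : ∀ p ∈ N.places, a p = μ₀ p := by
          intro p hp
          rw [hupd p]
          have hpm : p ∉ M.places := hd p hp
          simp [prodNet, M.pre_supp _ _ hpm, M.post_supp _ _ hpm, ha p hp]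
        obtain ⟨a', b', h1, h2, h3, h4⟩ := ih μ₀ μ' a b₀ hrest ha' hb₀'
        exact ⟨a', b', h1, ⟨b₀, ⟨henM, fun p => rfl⟩, h2⟩, h3, h4⟩
    | some t₁ =>
      cases o₂ with
      | none =>
        have henN : N.Enabled a t₁ := by
          intro p
          by_cases hp : p ∈ N.places
          · rw [ha p hp]
            simpa [prodNet] using hen p
          · simp [N.pre_supp _ _ hp]
        set a₀ : V → ℕ := fun p => a p - N.Pre t₁ p + N.Post t₁ p with ha₀
        have ha₀' : ∀ p ∈ N.places, a₀ p = μ₀ p := by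
          intro p hp
          rw [hupd p]
          simp [prodNet, ha₀, ha p hp]
        have hb' : ∀ p ∈ M.places, b p = μ₀ p := by
          intro p hp
          rw [hupd p]
          have hpn : p ∉ N.places := fun h => hd p h hp
          simp [prodNet, N.pre_supp _ _ hpn, N.post_supp _ _ hpn, hb p hp]
        obtain ⟨a', b', h1, h2, h3, h4⟩ := ih μ₀ μ' a₀ b hrest ha₀' hb'
        exact ⟨a', b', ⟨a₀, ⟨henN, fun p => rfl⟩, h1⟩, h2, h3, h4⟩
      | some tM =>
        have henN : N.Enabled a t₁ := by
          intro p
          by_cases hp : p ∈ N.places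
          · have h0 : N.Pre t₁ p + M.Pre tM p ≤ μ p := by simpa [prodNet] using hen p
            rw [ha p hp]; omega
          · simp [N.pre_supp _ _ hp]
        have henM : M.Enabled b tM := by
          intro p
          by_cases hp : p ∈ M.places
          · have h0 : N.Pre t₁ p + M.Pre tM p ≤ μ p := by simpa [prodNet] using hen p
            rw [hb p hp]; omega
          · simp [M.pre_supp _ _ hp]
        set a₀ : V → ℕ := fun p => a p - N.Pre t₁ p + N.Post t₁ p with ha₀
        set b₀ : V → ℕ := fun p => b p - M.Pre tM p + M.Post tM p with hb₀
        have ha₀' : ∀ p ∈ N.places, a₀ p = μ₀ p := by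
          intro p hp
          rw [hupd p]
          have hpm : p ∉ M.places := hd p hp
          simp [prodNet, ha₀, M.pre_supp _ _ hpm, M.post_supp _ _ hpm, ha p hp]
        have hb₀' : ∀ p ∈ M.places, b₀ p = μ₀ p := by
          intro p hp
          rw [hupd p]
          have hpn : p ∉ N.places := fun h => hd p h hp
          simp [prodNet, hb₀, N.pre_supp _ _ hpn, N.post_supp _ _ hpn, hb p hp]
        obtain ⟨a', b', h1, h2, h3, h4⟩ := ih μ₀ μ' a₀ b₀ hrest ha₀' hb₀'
        exact ⟨a', b', ⟨a₀, ⟨henN, fun p => rfl⟩, h1⟩, ⟨b₀, ⟨henM, fun p => rfl⟩, h2⟩, h3, h4⟩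

end Aux
section Aux2

variable {V L : Type}

/-- Compose component firing sequences into a product firing sequence. -/
lemma compose (N M : LNet V L) (S SM : Set L)
    (hd : ∀ p, p ∈ N.places → p ∉ M.places) :
    ∀ (σ : List (prodNet N M S SM).T) (a b μ a' b' : V → ℕ),
      N.FireSeq a (σ.filterMap (·.val.1)) a' →
      M.FireSeq b (σ.filterMap (·.val.2)) b' →
      (∀ p ∈ N.places, μ p = a p) → (∀ p ∈ M.places, μ p = b p) →
      ∃ μ', (prodNet N M S SM).FireSeq μ σ μ' ∧
        (∀ p ∈ N.places, μ' p = a' p) ∧ (∀ p ∈ M.places, μ' p = b' p) := by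
  intro σ
  induction σ with
  | nil =>
    intro a b μ a' b' hfa hfb ha hb
    obtain rfl : a' = a := hfa
    obtain rfl : b' = b := hfb
    exact ⟨μ, rfl, ha, hb⟩
  | cons t σ ih =>
    rcases t with ⟨⟨o₁, o₂⟩, hv⟩
    intro a b μ a' b' hfa hfb ha hb
    cases o₁ with
    | none =>
      cases o₂ with
      | none => exact absurd hv id
      | some tM =>
        have hfb' : M.FireSeq b (tM :: List.filterMap (fun x => x.val.2) σ) b' := hfb
        obtain ⟨b₀, ⟨henM, hupdM⟩, hrestM⟩ := hfb'
        set T : (prodNet N M S SM).T := ⟨(none, some tM), hv⟩ with hT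
        set μ₀ : V → ℕ :=
          fun p => μ p - (prodNet N M S SM).Pre T p + (prodNet N M S SM).Post T p with hμ₀
        have hen : (prodNet N M S SM).Enabled μ T := by
          intro p
          by_cases hp : p ∈ M.places
          · rw [hb p hp]
            simpa [prodNet, hT] using henM p
          · have := M.pre_supp tM p hp
            simp [prodNet, hT, this]
        have ha0 : ∀ p ∈ N.places, μ₀ p = a p := by
          intro p hp
          have hpm : p ∉ M.places := hd p hp
          simp [hμ₀, prodNet, hT, M.pre_supp _ _ hpm, M.post_supp _ _ hpm, ha p hp]
        have hb0 : ∀ p ∈ M.places, μ₀ p = b₀ p := by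
          intro p hp
          rw [hupdM p]
          simp [hμ₀, prodNet, hT, hb p hp]
        obtain ⟨μ', h1, h2, h3⟩ := ih a b₀ μ₀ a' b' hfa hrestM ha0 hb0
        exact ⟨μ', ⟨μ₀, ⟨hen, fun p => rfl⟩, h1⟩, h2, h3⟩
    | some t₂ =>
      cases o₂ with
      | none =>
        have hfa' : N.FireSeq a (t₂ :: List.filterMap (fun x => x.val.1) σ) a' := hfa
        obtain ⟨a₀, ⟨henN, hupdN⟩, hrestN⟩ := hfa'
        set T : (prodNet N M S SM).T := ⟨(some t₂, none), hv⟩ with hT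
        set μ₀ : V → ℕ :=
          fun p => μ p - (prodNet N M S SM).Pre T p + (prodNet N M S SM).Post T p with hμ₀
        have hen : (prodNet N M S SM).Enabled μ T := by
          intro p
          by_cases hp : p ∈ N.places
          · rw [ha p hp]
            simpa [prodNet, hT] using henN p
          · have := N.pre_supp t₂ p hp
            simp [prodNet, hT, this]
        have ha0 : ∀ p ∈ N.places, μ₀ p = a₀ p := by
          intro p hp
          rw [hupdN p]
          simp [hμ₀, prodNet, hT, ha p hp]
        have hb0 : ∀ p ∈ M.places, μ₀ p = b p := by
          intro p hp
          have hpn : p ∉ N.places := fun h => hd p h hp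
          simp [hμ₀, prodNet, hT, N.pre_supp _ _ hpn, N.post_supp _ _ hpn, hb p hp]
        obtain ⟨μ', h1, h2, h3⟩ := ih a₀ b μ₀ a' b' hrestN hfb ha0 hb0
        exact ⟨μ', ⟨μ₀, ⟨hen, fun p => rfl⟩, h1⟩, h2, h3⟩
      | some tM =>
        have hfa' : N.FireSeq a (t₂ :: List.filterMap (fun x => x.val.1) σ) a' := hfa
        obtain ⟨a₀, ⟨henN, hupdN⟩, hrestN⟩ := hfa'
        have hfb' : M.FireSeq b (tM :: List.filterMap (fun x => x.val.2) σ) b' := hfb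
        obtain ⟨b₀, ⟨henM, hupdM⟩, hrestM⟩ := hfb'
        set T : (prodNet N M S SM).T := ⟨(some t₂, some tM), hv⟩ with hT
        set μ₀ : V → ℕ :=
          fun p => μ p - (prodNet N M S SM).Pre T p + (prodNet N M S SM).Post T p with hμ₀
        have hen : (prodNet N M S SM).Enabled μ T := by
          intro p
          by_cases hp : p ∈ N.places
          · have hpm : p ∉ M.places := hd p hp
            have h1 := henN p
            rw [← ha p hp] at h1
            simp [prodNet, hT, M.pre_supp _ _ hpm]
            exact h1
          · by_cases hp2 : p ∈ M.places
            · have h1 := henM p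
              rw [← hb p hp2] at h1
              simp [prodNet, hT, N.pre_supp _ _ hp]
              exact h1
            · simp [prodNet, hT, N.pre_supp _ _ hp, M.pre_supp _ _ hp2]
        have ha0 : ∀ p ∈ N.places, μ₀ p = a₀ p := by
          intro p hp
          have hpm : p ∉ M.places := hd p hp
          rw [hupdN p]
          simp [hμ₀, prodNet, hT, M.pre_supp _ _ hpm, M.post_supp _ _ hpm, ha p hp]
        have hb0 : ∀ p ∈ M.places, μ₀ p = b₀ p := by
          intro p hp
          have hpn : p ∉ N.places := fun h => hd p h hp
          rw [hupdM p]
          simp [hμ₀, prodNet, hT, N.pre_supp _ _ hpn, N.post_supp _ _ hpn, hb p hp]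
        obtain ⟨μ', h1, h2, h3⟩ := ih a₀ b₀ μ₀ a' b' hrestN hrestM ha0 hb0
        exact ⟨μ', ⟨μ₀, ⟨hen, fun p => rfl⟩, h1⟩, h2, h3⟩

end Aux2
section Aux3

variable {V L : Type}

/-- A block of silent transitions of `N₂` fired solo in the product. -/
lemma tau_block (N₂ M : LNet V L) (S SM : Set L) :
    ∀ (l : List N₂.T), (∀ t ∈ l, N₂.label t = none) →
      ∃ σ : List (prodNet N₂ M S SM).T,
        σ.filterMap (·.val.1) = l ∧ σ.filterMap (·.val.2) = ([] : List M.T) ∧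
        (prodNet N₂ M S SM).Obs σ = ([] : List L) := by
  intro l
  induction l with
  | nil => exact fun _ => ⟨[], rfl, rfl, rfl⟩
  | cons t l ih =>
    intro h
    obtain ⟨σ, h1, h2, h3⟩ := ih fun u hu => h u (List.mem_cons_of_mem _ hu)
    have ht : N₂.label t = none := h t (List.mem_cons_self)
    have hvt : Valid N₂.label M.label S SM (some t, none) := by
      intro a ha; rw [ht] at ha; cases ha
    refine ⟨⟨(some t, none), hvt⟩ :: σ, ?_, ?_, ?_⟩
    · show t :: σ.filterMap (·.val.1) = t :: l
      rw [h1]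
    · show σ.filterMap (·.val.2) = ([] : List M.T)
      exact h2
    · show List.filterMap (prodNet N₂ M S SM).label (⟨(some t, none), hvt⟩ :: σ) = []
      erw [List.filterMap_cons_none (show (prodNet N₂ M S SM).label ⟨(some t, none), hvt⟩ = none from ht)]
      exact h3

/-- Build a product firing plan for `N₂ ∥ M` matching the shape of a run of
`N₁ ∥ M` and a component run `ρ₂` of `N₂` with the same observations. -/
lemma plan (N₁ N₂ M : LNet V L) (S SM : Set L) :
    ∀ (ρ : List (prodNet N₁ M S SM).T) (ρ₂ : List N₂.T),
      N₁.Obs (ρ.filterMap (·.val.1)) = N₂.Obs ρ₂ →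
      ∃ σ : List (prodNet N₂ M S SM).T,
        σ.filterMap (·.val.1) = ρ₂ ∧
        σ.filterMap (·.val.2) = ρ.filterMap (·.val.2) ∧
        (prodNet N₂ M S SM).Obs σ = (prodNet N₁ M S SM).Obs ρ := by
  intro ρ
  induction ρ with
  | nil =>
    intro ρ₂ h
    have h0 : ∀ t ∈ ρ₂, N₂.label t = none := by
      apply List.forall_none_of_filterMap_eq_nil
      exact (h.symm : N₂.Obs ρ₂ = N₁.Obs ([] : List N₁.T))
    obtain ⟨σ, h1, h2, h3⟩ := tau_block N₂ M S SM ρ₂ h0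
    exact ⟨σ, h1, h2, h3⟩
  | cons t ρ ih =>
    rcases t with ⟨⟨o₁, o₂⟩, hv⟩
    intro ρ₂ h
    cases o₁ with
    | none =>
      cases o₂ with
      | none => exact absurd hv id
      | some tM =>
        -- M fires alone; ρ₂ untouched at this step
        have h' : N₁.Obs (ρ.filterMap (·.val.1)) = N₂.Obs ρ₂ := h
        obtain ⟨σ, h1, h2, h3⟩ := ih ρ₂ h'
        refine ⟨⟨(none, some tM), hv⟩ :: σ, h1, ?_, ?_⟩
        · show tM :: σ.filterMap (·.val.2) = tM :: ρ.filterMap (·.val.2)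
          rw [h2]
        · show List.filterMap (prodNet N₂ M S SM).label (⟨(none, some tM), hv⟩ :: σ) =
            List.filterMap (prodNet N₁ M S SM).label (⟨(none, some tM), hv⟩ :: ρ)
          cases hM : M.label tM with
          | none =>
            erw [List.filterMap_cons_none (show (prodNet N₂ M S SM).label ⟨(none, some tM), hv⟩ = none from hM),
              List.filterMap_cons_none (show (prodNet N₁ M S SM).label ⟨(none, some tM), hv⟩ = none from hM)]
            exact h3
          | some aM =>
            erw [List.filterMap_cons_some (show (prodNet N₂ M S SM).label ⟨(none, some tM), hv⟩ = some aM from hM),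
              List.filterMap_cons_some (show (prodNet N₁ M S SM).label ⟨(none, some tM), hv⟩ = some aM from hM)]
            exact congrArg (List.cons aM) h3
    | some t₁ =>
      cases o₂ with
      | none =>
        cases hl : N₁.label t₁ with
        | none =>
          have h' : N₁.Obs (ρ.filterMap (·.val.1)) = N₂.Obs ρ₂ := by
            have : N₁.Obs (t₁ :: ρ.filterMap (·.val.1)) = N₁.Obs (ρ.filterMap (·.val.1)) :=
              List.filterMap_cons_none hl
            rw [← this]
            exact h
          obtain ⟨σ, h1, h2, h3⟩ := ih ρ₂ h'
          refine ⟨σ, h1, h2, ?_⟩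
          rw [h3]
          show List.filterMap (prodNet N₁ M S SM).label ρ =
            List.filterMap (prodNet N₁ M S SM).label (⟨(some t₁, none), hv⟩ :: ρ)
          erw [List.filterMap_cons_none (show (prodNet N₁ M S SM).label ⟨(some t₁, none), hv⟩ = none from hl)]
          rfl
        | some a =>
          -- obs starts with a
          have h' : a :: N₁.Obs (ρ.filterMap (·.val.1)) = N₂.Obs ρ₂ := by
            rw [← h]
            exact (List.filterMap_cons_some hl).symm
          have h'' : List.filterMap N₂.label ρ₂ = a :: N₁.Obs (ρ.filterMap (·.val.1)) := h'.symm
          obtain ⟨pre, t₂, post, rfl, hpre, ht₂, hpost⟩ :=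
            filterMap_split N₂.label ρ₂ a (N₁.Obs (ρ.filterMap (·.val.1))) h''
          obtain ⟨σp, hp1, hp2, hp3⟩ := tau_block N₂ M S SM pre hpre
          obtain ⟨σ, h1, h2, h3⟩ := ih post hpost.symm
          have hvt : Valid N₂.label M.label S SM (some t₂, none) := by
            intro a' ha'
            rw [ht₂] at ha'
            cases ha'
            exact hv a hl
          refine ⟨σp ++ ⟨(some t₂, none), hvt⟩ :: σ, ?_, ?_, ?_⟩
          · rw [List.filterMap_append, hp1]
            show pre ++ t₂ :: σ.filterMap (·.val.1) = pre ++ t₂ :: post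
            rw [h1]
          · rw [List.filterMap_append, hp2]
            show σ.filterMap (·.val.2) = ρ.filterMap (·.val.2)
            exact h2
          · rw [show (prodNet N₂ M S SM).Obs (σp ++ ⟨(some t₂, none), hvt⟩ :: σ) =
                (prodNet N₂ M S SM).Obs σp ++ (prodNet N₂ M S SM).Obs (⟨(some t₂, none), hvt⟩ :: σ)
                from List.filterMap_append, hp3, List.nil_append]
            show List.filterMap (prodNet N₂ M S SM).label (⟨(some t₂, none), hvt⟩ :: σ) =
              List.filterMap (prodNet N₁ M S SM).label (⟨(some t₁, none), hv⟩ :: ρ)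
            erw [List.filterMap_cons_some (show (prodNet N₂ M S SM).label ⟨(some t₂, none), hvt⟩ = some a from ht₂),
              List.filterMap_cons_some (show (prodNet N₁ M S SM).label ⟨(some t₁, none), hv⟩ = some a from hl)]
            exact congrArg (List.cons a) h3
      | some tM =>
        obtain ⟨a, hl, hM⟩ := hv
        have h' : a :: N₁.Obs (ρ.filterMap (·.val.1)) = N₂.Obs ρ₂ := by
          rw [← h]
          exact (List.filterMap_cons_some hl).symm
        have h'' : List.filterMap N₂.label ρ₂ = a :: N₁.Obs (ρ.filterMap (·.val.1)) := h'.symm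
        obtain ⟨pre, t₂, post, rfl, hpre, ht₂, hpost⟩ :=
          filterMap_split N₂.label ρ₂ a (N₁.Obs (ρ.filterMap (·.val.1))) h''
        obtain ⟨σp, hp1, hp2, hp3⟩ := tau_block N₂ M S SM pre hpre
        obtain ⟨σ, h1, h2, h3⟩ := ih post hpost.symm
        have hvt : Valid N₂.label M.label S SM (some t₂, some tM) := ⟨a, ht₂, hM⟩
        refine ⟨σp ++ ⟨(some t₂, some tM), hvt⟩ :: σ, ?_, ?_, ?_⟩
        · rw [List.filterMap_append, hp1]
          show pre ++ t₂ :: σ.filterMap (·.val.1) = pre ++ t₂ :: post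
          rw [h1]
        · rw [List.filterMap_append, hp2]
          show tM :: σ.filterMap (·.val.2) = tM :: ρ.filterMap (·.val.2)
          rw [h2]
        · rw [show (prodNet N₂ M S SM).Obs (σp ++ ⟨(some t₂, some tM), hvt⟩ :: σ) =
              (prodNet N₂ M S SM).Obs σp ++ (prodNet N₂ M S SM).Obs (⟨(some t₂, some tM), hvt⟩ :: σ)
              from List.filterMap_append, hp3, List.nil_append]
          show List.filterMap (prodNet N₂ M S SM).label (⟨(some t₂, some tM), hvt⟩ :: σ) =
            List.filterMap (prodNet N₁ M S SM).label (⟨(some t₁, some tM), ⟨a, hl, hM⟩⟩ :: ρ)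
          erw [List.filterMap_cons_some
              (show (prodNet N₂ M S SM).label ⟨(some t₂, some tM), hvt⟩ = some a from ht₂),
            List.filterMap_cons_some
              (show (prodNet N₁ M S SM).label ⟨(some t₁, some tM), ⟨a, hl, hM⟩⟩ = some a from hl)]
          exact congrArg (List.cons a) h3

end Aux3
section Aux4

variable {V L : Type}

/-- Lift a joint satisfaction to the two products, given an agreed `M`-part. -/
lemma JSat_prod (N₁ N₂ M : LNet V L) (S SM : Set L) (E : (V → ℕ) → Prop) (fvE : Set V)
    (hE : DependsOnVars E fvE)
    (hd : ∀ p, p ∈ N₁.places ∪ N₂.places → p ∉ M.places)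
    (hfr : ∀ p ∈ fvE, p ∉ N₁.places ∪ N₂.places → p ∉ M.places)
    (x y μx μy : V → ℕ)
    (hx : ∀ p ∈ N₁.places, μx p = x p) (hy : ∀ p ∈ N₂.places, μy p = y p)
    (hM : ∀ p ∈ M.places, μx p = μy p)
    (hJ : JSat N₁ N₂ E x y) :
    JSat (prodNet N₁ M S SM) (prodNet N₂ M S SM) E μx μy := by
  obtain ⟨v, hv1, hv2, hvE⟩ := hJ
  refine ⟨fun p => if p ∈ N₁.places ∪ N₂.places then v p else if p ∈ M.places then μx p
      else v p, ?_, ?_, ?_⟩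
  · intro p hp
    show (if p ∈ N₁.places ∪ N₂.places then v p else if p ∈ M.places then μx p else v p) = μx p
    have hp' : p ∈ N₁.places ∪ M.places := hp
    rcases hp' with hp' | hp'
    · rw [if_pos (Set.mem_union_left _ hp'), hv1 p hp']
      exact (hx p hp').symm
    · have h1 : p ∉ N₁.places ∪ N₂.places := fun hc => hd p hc hp'
      rw [if_neg h1, if_pos hp']
  · intro p hp
    show (if p ∈ N₁.places ∪ N₂.places then v p else if p ∈ M.places then μx p else v p) = μy p
    have hp' : p ∈ N₂.places ∪ M.places := hp
    rcases hp' with hp' | hp'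
    · rw [if_pos (Set.mem_union_right _ hp'), hv2 p hp']
      exact (hy p hp').symm
    · have h1 : p ∉ N₁.places ∪ N₂.places := fun hc => hd p hc hp'
      rw [if_neg h1, if_pos hp']
      exact hM p hp'
  · refine (hE _ v ?_).mpr hvE
    intro q hq
    show (if q ∈ N₁.places ∪ N₂.places then v q else if q ∈ M.places then μx q else v q) = v q
    by_cases h1 : q ∈ N₁.places ∪ N₂.places
    · rw [if_pos h1]
    · have h2 : q ∉ M.places := hfr q hq h1
      rw [if_neg h1, if_neg h2]

/-- One direction of composability. -/
lemma EAbs_prod (N₁ N₂ M : LNet V L) (m₁ m₂ m : V → ℕ) (E : (V → ℕ) → Prop)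
    (S SM : Set L) (fvE : Set V)
    (hE : DependsOnVars E fvE)
    (hd : ∀ p, p ∈ N₁.places ∪ N₂.places → p ∉ M.places)
    (hfr : ∀ p ∈ fvE, p ∉ N₁.places ∪ N₂.places → p ∉ M.places)
    (h : EAbs N₁ m₁ N₂ m₂ E) :
    EAbs (prodNet N₁ M S SM) (combine N₁.places m₁ m)
      (prodNet N₂ M S SM) (combine N₂.places m₂ m) E := by
  obtain ⟨hA1, hA2⟩ := h
  have hd1 : ∀ p, p ∈ N₁.places → p ∉ M.places := fun p hp => hd p (Set.mem_union_left _ hp)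
  have hd2 : ∀ p, p ∈ N₂.places → p ∉ M.places := fun p hp => hd p (Set.mem_union_right _ hp)
  constructor
  · -- (A1)
    refine JSat_prod N₁ N₂ M S SM E fvE hE hd hfr m₁ m₂ _ _ ?_ ?_ ?_ hA1
    · intro p hp; exact if_pos hp
    · intro p hp; exact if_pos hp
    · intro p hp
      rw [show combine N₁.places m₁ m p = m p from if_neg fun hc => hd1 p hc hp,
        show combine N₂.places m₂ m p = m p from if_neg fun hc => hd2 p hc hp]
  · -- (A2)
    intro ρ μ' hfire
    obtain ⟨a', b', hA', hB', ha', hb'⟩ :=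
      decompose N₁ M S SM hd1 ρ (combine N₁.places m₁ m) μ' m₁ m hfire
        (fun p hp => (if_pos hp).symm)
        (fun p hp => (if_neg fun hc => hd1 p hc hp).symm)
    obtain ⟨⟨m₂', hJ'⟩, hstep⟩ := hA2 (ρ.filterMap (·.val.1)) a' hA'
    constructor
    · refine ⟨combine N₂.places m₂' μ',
        JSat_prod N₁ N₂ M S SM E fvE hE hd hfr a' m₂' μ' _ ?_ ?_ ?_ hJ'⟩
      · intro p hp; exact (ha' p hp).symm
      · intro p hp; exact if_pos hp
      · intro p hp
        exact (if_neg fun hc => hd2 p hc hp).symm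
    · intro μ₂' hJ2
      obtain ⟨v, hv1, hv2, hvE⟩ := hJ2
      have hJb : JSat N₁ N₂ E a' μ₂' :=
        ⟨v, fun p hp => (hv1 p (Set.mem_union_left _ hp)).trans (ha' p hp).symm,
          fun p hp => hv2 p (Set.mem_union_left _ hp), hvE⟩
      obtain ⟨ρ₂, m₂'', hseq2, hag2, hobs⟩ := hstep μ₂' hJb
      obtain ⟨σ, hσ1, hσ2, hσ3⟩ := plan N₁ N₂ M S SM ρ ρ₂ hobs
      have hfa : N₂.FireSeq m₂ (σ.filterMap (·.val.1)) m₂'' := by rw [hσ1]; exact hseq2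
      have hfb : M.FireSeq m (σ.filterMap (·.val.2)) b' := by rw [hσ2]; exact hB'
      obtain ⟨μ₂'', hfire2, hp2, hpM⟩ :=
        compose N₂ M S SM hd2 σ m₂ m (combine N₂.places m₂ m) m₂'' b' hfa hfb
          (fun p hp => if_pos hp)
          (fun p hp => if_neg fun hc => hd2 p hc hp)
      refine ⟨σ, μ₂'', hfire2, ?_, hσ3.symm⟩
      intro p hp
      have hp' : p ∈ N₂.places ∪ M.places := hp
      rcases hp' with hp' | hp'
      · rw [hp2 p hp', hag2 p hp']
      · rw [hpM p hp', hb' p hp']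
        rw [← hv1 p (Set.mem_union_right _ hp'), hv2 p (Set.mem_union_right _ hp')]

end Aux4
/-- (Composability.)  Assume `(N₁, m₁) ▷_E (N₂, m₂)` and that the marked net
`(M, m)` is compatible with this equivalence: its places are disjoint from
`P₁ ∪ P₂` and from the (fresh) variables of `E` outside `P₁ ∪ P₂`.  Then
`(N₁, m₁) ∥ (M, m) ▷_E (N₂, m₂) ∥ (M, m)`. -/
theorem EEquiv_prod {V L : Type} (N₁ N₂ M : LNet V L) (m₁ m₂ m : V → ℕ)
    (E : (V → ℕ) → Prop) (S SM : Set L) (fvE : Set V)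
    (hE : DependsOnVars E fvE)
    (hdisj : (N₁.places ∪ N₂.places) ∩ M.places = ∅)
    (hfresh : (fvE \ (N₁.places ∪ N₂.places)) ∩ M.places = ∅)
    (h : EEquiv N₁ m₁ N₂ m₂ E) :
    EEquiv (prodNet N₁ M S SM) (combine N₁.places m₁ m)
           (prodNet N₂ M S SM) (combine N₂.places m₂ m) E := by
  obtain ⟨h1, h2⟩ := h
  have hd : ∀ p, p ∈ N₁.places ∪ N₂.places → p ∉ M.places := fun p hp hpm =>
    Set.eq_empty_iff_forall_notMem.mp hdisj p ⟨hp, hpm⟩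
  have hfr : ∀ p ∈ fvE, p ∉ N₁.places ∪ N₂.places → p ∉ M.places := fun p hp hnp hpm =>
    Set.eq_empty_iff_forall_notMem.mp hfresh p ⟨⟨hp, hnp⟩, hpm⟩
  constructor
  · exact EAbs_prod N₁ N₂ M m₁ m₂ m E S SM fvE hE hd hfr h1
  · refine EAbs_prod N₂ N₁ M m₂ m₁ m E S SM fvE hE ?_ ?_ h2
    · intro p hp
      exact hd p (by rcases hp with hp | hp; exacts [Set.mem_union_right _ hp,
        Set.mem_union_left _ hp])
    · intro p hpf hnp
      refine hfr p hpf fun hc => hnp ?_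
      rcases hc with hc | hc
      exacts [Set.mem_union_right _ hc, Set.mem_union_left _ hc]
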